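/- For any connected non-trivial graph G of order n and any n ≥ 5, the corona product G⊙C_n (every copy is the cycle C_n) is 4-metric dimensional. -/

import Mathlib

open SimpleGraph
open Fin.NatCast Fin.CommRing

/-- `S` is a `k`-metric generator for `G`: every pair of distinct vertices is
distinguished (has different distances) by at least `k` vertices of `S`. -/
def kMetricGen {V : Type*} [Fintype V] (G : SimpleGraph V) (k : ℕ) (S : Set V) : Prop :=
  ∀ u v : V, u ≠ v → ∃ T : Finset V, ↑T ⊆ S ∧ k ≤ T.card ∧ ∀ w ∈ T, G.dist u w ≠ G.dist v w

/-- `G` is `k`-metric dimensional: `k` is the largest integer admitting a `k`-metric generator. -/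
def kMetricDimensional {V : Type*} [Fintype V] (G : SimpleGraph V) (k : ℕ) : Prop :=
  (∃ S : Set V, kMetricGen G k S) ∧ ∀ k' : ℕ, (∃ S : Set V, kMetricGen G k' S) → k' ≤ k

/-- The `k`-metric dimension of `G`. -/
noncomputable def kMetricDim {V : Type*} [Fintype V] (G : SimpleGraph V) (k : ℕ) : ℕ :=
  sInf {m | ∃ S : Finset V, kMetricGen G k ↑S ∧ S.card = m}

/-- A `k`-metric basis: a minimum-cardinality `k`-metric generator. -/
def kMetricBasis {V : Type*} [Fintype V] (G : SimpleGraph V) (k : ℕ) (B : Finset V) : Prop :=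
  kMetricGen G k ↑B ∧ ∀ T : Finset V, kMetricGen G k ↑T → B.card ≤ T.card

/-- Auxiliary relation for the corona product. -/
def coronaRel {V : Type*} {W : V → Type*} (G : SimpleGraph V) (H : ∀ v, SimpleGraph (W v)) :
    (V ⊕ (Σ v, W v)) → (V ⊕ (Σ v, W v)) → Prop
  | Sum.inl a, Sum.inl b => G.Adj a b
  | Sum.inl a, Sum.inr b => a = b.1
  | Sum.inr a, Sum.inr b => ∃ h : a.1 = b.1, (H b.1).Adj (h ▸ a.2) b.2
  | _, _ => False

/-- The corona product `G ⊙ 𝓗`: one copy of `G`, and each vertex `v` of `G` joined by an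
edge to every vertex of its own copy of `H v`. -/
def corona {V : Type*} {W : V → Type*} (G : SimpleGraph V) (H : ∀ v, SimpleGraph (W v)) :
    SimpleGraph (V ⊕ (Σ v, W v)) :=
  SimpleGraph.fromRel (coronaRel G H)

/-- The join `K₁ + H`: a new vertex (`none`) adjacent to every vertex of `H`. -/
def K1join {U : Type*} (H : SimpleGraph U) : SimpleGraph (Option U) :=
  SimpleGraph.fromRel (fun x y => match x, y with
    | none, some _ => True
    | some a, some b => H.Adj a b
    | _, _ => False)

/-- `𝒞(H) = min_{x ≠ y} |(N(x) △ N(y)) ∪ {x,y}|`. -/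
noncomputable def CC {U : Type*} (H : SimpleGraph U) : ℕ :=
  sInf {m | ∃ x y : U, x ≠ y ∧
    (symmDiff (H.neighborSet x) (H.neighborSet y) ∪ {x, y}).ncard = m}


/-! ### Auxiliary development -/

section aux

lemma walk_lower {X : Type*} {H : SimpleGraph X} (f : X → ℕ)
    (hf : ∀ a b, H.Adj a b → f a ≤ f b + 1) {x y : X} (p : H.Walk x y) :
    f x ≤ p.length + f y := by
  induction p with
  | nil => simp
  | cons h q ih =>
    have := hf _ _ h
    simp only [SimpleGraph.Walk.length_cons]
    omega

lemma dist_lower {X : Type*} {H : SimpleGraph X} (f : X → ℕ) {x y : X}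
    (hf : ∀ a b, H.Adj a b → f a ≤ f b + 1) (hy : f y = 0) (hr : H.Reachable x y) :
    f x ≤ H.dist x y := by
  obtain ⟨p, hp⟩ := hr.exists_walk_length_eq_dist
  have := walk_lower f hf p
  omega

variable {V : Type*} {G : SimpleGraph V} {m : ℕ}

local notation "CG" => corona G (fun _ : V => SimpleGraph.cycleGraph m)

lemma adj_ll {u v : V} : (CG).Adj (Sum.inl u) (Sum.inl v) ↔ G.Adj u v := by
  simp only [corona, fromRel_adj, coronaRel]
  constructor
  · rintro ⟨hne, (h | h)⟩
    · exact h
    · exact h.symm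
  · intro h
    exact ⟨by simpa using h.ne, Or.inl h⟩

lemma adj_lr {u v : V} {a : Fin m} : (CG).Adj (Sum.inl u) (Sum.inr ⟨v, a⟩) ↔ u = v := by
  simp only [corona, fromRel_adj, coronaRel]
  constructor
  · rintro ⟨hne, (h | h)⟩
    · exact h
    · exact h.elim
  · rintro rfl
    exact ⟨by simp, Or.inl rfl⟩

lemma adj_rr {u v : V} {a b : Fin m} :
    (CG).Adj (Sum.inr ⟨u, a⟩) (Sum.inr ⟨v, b⟩) ↔ u = v ∧ (SimpleGraph.cycleGraph m).Adj a b := by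
  simp only [corona, fromRel_adj, coronaRel]
  constructor
  · rintro ⟨hne, (⟨h, hadj⟩ | ⟨h, hadj⟩)⟩
    · subst h; exact ⟨rfl, hadj⟩
    · subst h; exact ⟨rfl, hadj.symm⟩
  · rintro ⟨rfl, h⟩
    refine ⟨?_, Or.inl ⟨rfl, h⟩⟩
    simp only [ne_eq, Sum.inr.injEq, Sigma.mk.inj_iff, heq_eq_eq, true_and]
    exact fun hh => h.ne (by simpa using hh)

def inlHom (G : SimpleGraph V) (m : ℕ) : G →g (corona G (fun _ : V => SimpleGraph.cycleGraph m)) :=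
  ⟨Sum.inl, fun h => adj_ll.mpr h⟩

lemma corona_connected (hG : G.Connected) : (CG).Connected := by
  have hne : Nonempty V := hG.nonempty
  have hbase : ∀ x : V ⊕ (Σ _ : V, Fin m), ∃ u : V, (CG).Reachable x (Sum.inl u) := by
    rintro (u | ⟨v, a⟩)
    · exact ⟨u, Reachable.refl _⟩
    · exact ⟨v, (SimpleGraph.Adj.reachable ((adj_lr.mpr rfl).symm))⟩
  have : Nonempty (V ⊕ (Σ _ : V, Fin m)) := ⟨Sum.inl (Classical.arbitrary V)⟩
  constructor
  intro x y
  obtain ⟨u, hu⟩ := hbase x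
  obtain ⟨w, hw⟩ := hbase y
  refine hu.trans (Reachable.trans ?_ hw.symm)
  obtain ⟨p⟩ := hG.preconnected u w
  exact ⟨p.map (inlHom G m)⟩

lemma dist_ll (hG : G.Connected) (u v : V) :
    (CG).dist (Sum.inl u) (Sum.inl v) = G.dist u v := by
  have hle : (CG).dist (Sum.inl u) (Sum.inl v) ≤ G.dist u v := by
    obtain ⟨p, hp⟩ := hG.exists_walk_length_eq_dist u v
    calc (CG).dist (Sum.inl u) (Sum.inl v) ≤ (p.map (inlHom G m)).length := dist_le _
    _ = G.dist u v := by rw [Walk.length_map, hp]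
  have hge : G.dist u v ≤ (CG).dist (Sum.inl u) (Sum.inl v) := by
    have key := dist_lower (H := (CG)) (x := Sum.inl u) (y := Sum.inl v)
      (Sum.elim (fun w => G.dist w v) (fun p => G.dist p.1 v + 1))
      ?_ (by simp) ((corona_connected hG).preconnected _ _)
    · simpa using key
    rintro (a | ⟨a, c⟩) (b | ⟨b, d⟩) h
    · rw [adj_ll] at h
      simp only [Sum.elim_inl]
      have := hG.dist_triangle (u := a) (v := b) (w := v)
      rw [SimpleGraph.dist_eq_one_iff_adj.mpr h] at this; omega
    · rcases adj_lr.mp h with rfl; simp only [Sum.elim_inl, Sum.elim_inr]; omega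
    · rcases adj_lr.mp h.symm with rfl; simp only [Sum.elim_inl, Sum.elim_inr]; omega
    · rcases (adj_rr.mp h).1 with rfl; simp
  omega

open scoped Classical in
/-- the potential for distance to `inr ⟨t, b⟩` -/
noncomputable def pot (G : SimpleGraph V) (m : ℕ) (t : V) (b : Fin m) : (V ⊕ (Σ _ : V, Fin m)) → ℕ :=
  Sum.elim (fun w => G.dist w t + 1)
    (fun p => if p.1 = t then (if p.2 = b then 0 else if (SimpleGraph.cycleGraph m).Adj p.2 b then 1 else 2)
      else G.dist p.1 t + 2)

lemma pot_lip (hG : G.Connected) (t : V) (b : Fin m) :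
    ∀ x y, (CG).Adj x y → pot G m t b x ≤ pot G m t b y + 1 := by
  rintro (a | ⟨a, c⟩) (w | ⟨w, d⟩) h
  · rw [adj_ll] at h
    simp only [pot, Sum.elim_inl]
    have := hG.dist_triangle (u := a) (v := w) (w := t)
    rw [SimpleGraph.dist_eq_one_iff_adj.mpr h] at this; omega
  · rcases adj_lr.mp h with rfl
    simp only [pot, Sum.elim_inl, Sum.elim_inr]
    by_cases h1 : a = t
    · subst h1
      rw [if_pos rfl, SimpleGraph.dist_self]
      split_ifs <;> omega
    · rw [if_neg h1]; omega
  · rcases adj_lr.mp h.symm with rfl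
    simp only [pot, Sum.elim_inl, Sum.elim_inr]
    by_cases h1 : w = t
    · subst h1
      rw [if_pos rfl, SimpleGraph.dist_self]
      split_ifs <;> omega
    · rw [if_neg h1]; try omega
  · obtain ⟨rfl, hcd⟩ := adj_rr.mp h
    simp only [pot, Sum.elim_inr]
    by_cases h1 : a = t
    · subst h1
      rw [if_pos rfl]
      by_cases h2 : c = b
      · simp [h2]
      · rw [if_neg h2]
        by_cases h3 : (SimpleGraph.cycleGraph m).Adj c b
        · rw [if_pos h3]
          split_ifs <;> omega
        · rw [if_neg h3]
          have hd : d ≠ b := by rintro rfl; exact h3 hcd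
          rw [if_neg hd]
          split_ifs <;> omega
    · simp [h1]

lemma pot_dist_le (hG : G.Connected) (t : V) (b : Fin m) (x : V ⊕ (Σ _ : V, Fin m)) :
    pot G m t b x ≤ (CG).dist x (Sum.inr ⟨t, b⟩) := by
  refine dist_lower (pot G m t b) (pot_lip hG t b) ?_
    ((corona_connected hG).preconnected _ _)
  simp [pot]

lemma dist_lr' (hG : G.Connected) (u t : V) (b : Fin m) :
    (CG).dist (Sum.inl u) (Sum.inr ⟨t, b⟩) = G.dist u t + 1 := by
  have hge := pot_dist_le hG t b (Sum.inl u)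
  simp only [pot, Sum.elim_inl] at hge
  have hle : (CG).dist (Sum.inl u) (Sum.inr ⟨t, b⟩) ≤ G.dist u t + 1 := by
    obtain ⟨p, hp⟩ := hG.exists_walk_length_eq_dist u t
    calc (CG).dist (Sum.inl u) (Sum.inr ⟨t, b⟩)
        ≤ (((p.map (inlHom G m)).concat (adj_lr.mpr rfl)
            : (CG).Walk (Sum.inl u) (Sum.inr ⟨t, b⟩))).length := dist_le _
      _ = G.dist u t + 1 := (Walk.length_concat _ _).trans (by rw [Walk.length_map, hp])
  omega

lemma dist_rl' (hG : G.Connected) (v t : V) (a : Fin m) :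
    (CG).dist (Sum.inr ⟨v, a⟩) (Sum.inl t) = G.dist v t + 1 := by
  rw [SimpleGraph.dist_comm, dist_lr' hG t v a, SimpleGraph.dist_comm]

lemma dist_rr_ne (hG : G.Connected) {v t : V} (hvt : v ≠ t) (a b : Fin m) :
    (CG).dist (Sum.inr ⟨v, a⟩) (Sum.inr ⟨t, b⟩) = G.dist v t + 2 := by
  have hge := pot_dist_le hG t b (Sum.inr ⟨v, a⟩)
  simp only [pot, Sum.elim_inr, if_neg hvt] at hge
  have hle : (CG).dist (Sum.inr ⟨v, a⟩) (Sum.inr ⟨t, b⟩) ≤ G.dist v t + 2 := by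
    obtain ⟨p, hp⟩ := hG.exists_walk_length_eq_dist v t
    calc (CG).dist (Sum.inr ⟨v, a⟩) (Sum.inr ⟨t, b⟩)
        ≤ ((Walk.cons ((adj_lr.mpr rfl).symm)
            ((p.map (inlHom G m)).concat (adj_lr.mpr rfl))
            : (CG).Walk (Sum.inr ⟨v, a⟩) (Sum.inr ⟨t, b⟩))).length := dist_le _
      _ = G.dist v t + 2 := by
          refine (Walk.length_cons _ _).trans ?_
          exact congrArg (· + 1) ((Walk.length_concat _ _).trans
            (congrArg (· + 1) ((Walk.length_map _ _).trans hp)))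
  omega

lemma dist_rr_adj (v : V) {a b : Fin m} (hab : (SimpleGraph.cycleGraph m).Adj a b) :
    (CG).dist (Sum.inr ⟨v, a⟩) (Sum.inr ⟨v, b⟩) = 1 :=
  SimpleGraph.dist_eq_one_iff_adj.mpr (adj_rr.mpr ⟨rfl, hab⟩)

lemma dist_rr_same_le (v : V) (a b : Fin m) :
    (CG).dist (Sum.inr ⟨v, a⟩) (Sum.inr ⟨v, b⟩) ≤ 2 := by
  calc (CG).dist (Sum.inr ⟨v, a⟩) (Sum.inr ⟨v, b⟩)
      ≤ ((Walk.cons ((adj_lr.mpr rfl).symm)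
          (Walk.cons (adj_lr.mpr rfl) Walk.nil)
          : (CG).Walk (Sum.inr ⟨v, a⟩) (Sum.inr ⟨v, b⟩))).length := dist_le _
    _ = 2 := by simp

lemma dist_rr_nonadj (hG : G.Connected) (v : V) {a b : Fin m} (hab : a ≠ b)
    (hna : ¬ (SimpleGraph.cycleGraph m).Adj a b) :
    (CG).dist (Sum.inr ⟨v, a⟩) (Sum.inr ⟨v, b⟩) = 2 := by
  have hge := pot_dist_le hG v b (Sum.inr ⟨v, a⟩)
  simp [pot, hab, hna] at hge
  have hle := dist_rr_same_le (G := G) v a b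
  omega

end aux

section cyc
variable {m : ℕ} [NeZero m]

lemma fin_cast_zero_contra (hm : 5 ≤ m) {k : ℕ} (h0 : 0 < k) (hk : k < 5)
    (h : ((k : ℕ) : Fin m) = 0) : False := by
  have := congrArg Fin.val h
  rw [Fin.val_cast_of_lt (by omega), Fin.val_zero] at this
  omega

lemma cyc_adj (hm : 5 ≤ m) {a b : Fin m} :
    (SimpleGraph.cycleGraph m).Adj a b ↔ a = b + 1 ∨ b = a + 1 := by
  have h1 : (1 : Fin m).val = 1 := by
    rw [Fin.val_one' m]; exact Nat.mod_eq_of_lt (by omega)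
  rw [SimpleGraph.cycleGraph_adj']
  constructor
  · rintro (h | h)
    · left
      have h2 : a - b = 1 := by rw [Fin.ext_iff, h1]; exact h
      rw [sub_eq_iff_eq_add] at h2
      exact h2.trans (add_comm 1 b)
    · right
      have h2 : b - a = 1 := by rw [Fin.ext_iff, h1]; exact h
      rw [sub_eq_iff_eq_add] at h2
      exact h2.trans (add_comm 1 a)
  · rintro (h | h)
    · left
      have h2 : a - b = 1 := by rw [h]; ring
      rw [h2, h1]
    · right
      have h2 : b - a = 1 := by rw [h]; ring
      rw [h2, h1]

lemma exists_private_neighbor (hm : 5 ≤ m) {a b : Fin m} (hab : a ≠ b) :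
    ∃ c : Fin m, (SimpleGraph.cycleGraph m).Adj a c ∧
      ¬ (SimpleGraph.cycleGraph m).Adj b c ∧ c ≠ b := by
  by_cases h1 : b = a + 1
  · subst h1
    refine ⟨a - 1, ?_, ?_, ?_⟩
    · rw [cyc_adj hm]; left; ring
    · rw [cyc_adj hm]
      rintro (h | h)
      · exact fin_cast_zero_contra hm (k := 1) (by omega) (by omega)
          (by push_cast; linear_combination h)
      · exact fin_cast_zero_contra hm (k := 3) (by omega) (by omega)
          (by push_cast; linear_combination -h)
    · intro h
      exact fin_cast_zero_contra hm (k := 2) (by omega) (by omega)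
        (by push_cast; linear_combination -h)
  · by_cases h2 : a = b + 1
    · subst h2
      refine ⟨b + 1 + 1, ?_, ?_, ?_⟩
      · rw [cyc_adj hm]; right; rfl
      · rw [cyc_adj hm]
        rintro (h | h)
        · exact fin_cast_zero_contra hm (k := 3) (by omega) (by omega)
            (by push_cast; linear_combination -h)
        · exact fin_cast_zero_contra hm (k := 1) (by omega) (by omega)
            (by push_cast; linear_combination h)
      · intro h
        exact fin_cast_zero_contra hm (k := 2) (by omega) (by omega)
          (by push_cast; linear_combination h)
    · by_cases h3 : b = a + 1 + 1
      · subst h3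
        refine ⟨a - 1, ?_, ?_, ?_⟩
        · rw [cyc_adj hm]; left; ring
        · rw [cyc_adj hm]
          rintro (h | h)
          · exact fin_cast_zero_contra hm (k := 2) (by omega) (by omega)
              (by push_cast; linear_combination h)
          · exact fin_cast_zero_contra hm (k := 4) (by omega) (by omega)
              (by push_cast; linear_combination -h)
        · intro h
          exact fin_cast_zero_contra hm (k := 3) (by omega) (by omega)
            (by push_cast; linear_combination -h)
      · refine ⟨a + 1, ?_, ?_, ?_⟩
        · rw [cyc_adj hm]; right; rfl
        · rw [cyc_adj hm]
          rintro (h | h)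
          · exact h3 (by linear_combination h)
          · exact hab (by linear_combination h)
        · intro h
          exact h1 h.symm

end cyc

section pairs
variable {V : Type*} {G : SimpleGraph V} {m : ℕ}

local notation "CG" => corona G (fun _ : V => SimpleGraph.cycleGraph m)

lemma pair_ll [Fintype V] (hG : G.Connected) (hm : 5 ≤ m) {u v : V} (huv : u ≠ v) :
    ∃ T : Finset (V ⊕ (Σ _ : V, Fin m)), 4 ≤ T.card ∧
      ∀ w ∈ T, (CG).dist (Sum.inl u) w ≠ (CG).dist (Sum.inl v) w := by
  classical
  refine ⟨Finset.univ.image (fun c : Fin m => Sum.inr ⟨u, c⟩), ?_, ?_⟩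
  · rw [Finset.card_image_of_injective _ (fun c d h => by simpa using h)]
    simp only [Finset.card_univ, Fintype.card_fin]
    omega
  · intro w hw
    simp only [Finset.mem_image, Finset.mem_univ, true_and] at hw
    obtain ⟨c, rfl⟩ := hw
    rw [dist_lr' hG, dist_lr' hG, SimpleGraph.dist_self]
    have := hG.pos_dist_of_ne (Ne.symm huv)
    omega

lemma pair_lr [Fintype V] (hG : G.Connected) (hm : 5 ≤ m) (u v : V) (b : Fin m) :
    ∃ T : Finset (V ⊕ (Σ _ : V, Fin m)), 4 ≤ T.card ∧
      ∀ w ∈ T, (CG).dist (Sum.inl u) w ≠ (CG).dist (Sum.inr ⟨v, b⟩) w := by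
  classical
  haveI : NeZero m := ⟨by omega⟩
  by_cases huv : u = v
  · subst huv
    have d1 : b ≠ b + 1 + 1 := fun h =>
      fin_cast_zero_contra hm (k := 2) (by omega) (by omega)
        (by push_cast; linear_combination -h)
    have d2 : b ≠ b + 1 + 1 + 1 := fun h =>
      fin_cast_zero_contra hm (k := 3) (by omega) (by omega)
        (by push_cast; linear_combination -h)
    have d3 : b + 1 + 1 ≠ b + 1 + 1 + 1 := fun h =>
      fin_cast_zero_contra hm (k := 1) (by omega) (by omega)
        (by push_cast; linear_combination -h)
    have na1 : ¬ (SimpleGraph.cycleGraph m).Adj b (b + 1 + 1) := by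
      rw [cyc_adj hm]
      rintro (h | h)
      · exact fin_cast_zero_contra hm (k := 3) (by omega) (by omega)
          (by push_cast; linear_combination -h)
      · exact fin_cast_zero_contra hm (k := 1) (by omega) (by omega)
          (by push_cast; linear_combination h)
    have na2 : ¬ (SimpleGraph.cycleGraph m).Adj b (b + 1 + 1 + 1) := by
      rw [cyc_adj hm]
      rintro (h | h)
      · exact fin_cast_zero_contra hm (k := 4) (by omega) (by omega)
          (by push_cast; linear_combination -h)
      · exact fin_cast_zero_contra hm (k := 2) (by omega) (by omega)
          (by push_cast; linear_combination h)
    refine ⟨{Sum.inl u, Sum.inr ⟨u, b⟩, Sum.inr ⟨u, b + 1 + 1⟩, Sum.inr ⟨u, b + 1 + 1 + 1⟩}, ?_, ?_⟩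
    · rw [Finset.card_insert_of_notMem (by simp),
        Finset.card_insert_of_notMem (by simp [d1, d2]),
        Finset.card_insert_of_notMem (by simp [d3]),
        Finset.card_singleton]
    · intro w hw
      simp only [Finset.mem_insert, Finset.mem_singleton] at hw
      rcases hw with rfl | rfl | rfl | rfl
      · rw [SimpleGraph.dist_self, dist_rl' hG, SimpleGraph.dist_self]
        omega
      · rw [dist_lr' hG, SimpleGraph.dist_self, SimpleGraph.dist_self]
        omega
      · rw [dist_lr' hG, SimpleGraph.dist_self, dist_rr_nonadj hG u d1 na1]
        omega
      · rw [dist_lr' hG, SimpleGraph.dist_self, dist_rr_nonadj hG u d2 na2]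
        omega
  · refine ⟨Finset.univ.image (fun c : Fin m => Sum.inr ⟨u, c⟩), ?_, ?_⟩
    · rw [Finset.card_image_of_injective _ (fun c d h => by simpa using h)]
      simp only [Finset.card_univ, Fintype.card_fin]
      omega
    · intro w hw
      simp only [Finset.mem_image, Finset.mem_univ, true_and] at hw
      obtain ⟨c, rfl⟩ := hw
      rw [dist_lr' hG, SimpleGraph.dist_self, dist_rr_ne hG (Ne.symm huv)]
      have := hG.pos_dist_of_ne (fun h : v = u => huv h.symm)
      omega

lemma pair_rr_diff [Fintype V] (hG : G.Connected) (hm : 5 ≤ m) {u v : V} (huv : u ≠ v)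
    (a b : Fin m) :
    ∃ T : Finset (V ⊕ (Σ _ : V, Fin m)), 4 ≤ T.card ∧
      ∀ w ∈ T, (CG).dist (Sum.inr ⟨u, a⟩) w ≠ (CG).dist (Sum.inr ⟨v, b⟩) w := by
  classical
  refine ⟨Finset.univ.image (fun c : Fin m => Sum.inr ⟨u, c⟩), ?_, ?_⟩
  · rw [Finset.card_image_of_injective _ (fun c d h => by simpa using h)]
    simp only [Finset.card_univ, Fintype.card_fin]
    omega
  · intro w hw
    simp only [Finset.mem_image, Finset.mem_univ, true_and] at hw
    obtain ⟨c, rfl⟩ := hw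
    rw [dist_rr_ne hG (Ne.symm huv)]
    have h1 := dist_rr_same_le (G := G) u a c
    have h2 := hG.pos_dist_of_ne (fun h : v = u => huv h.symm)
    omega

lemma pair_rr_same [Fintype V] (hG : G.Connected) (hm : 5 ≤ m) (v : V) {a b : Fin m}
    (hab : a ≠ b) :
    ∃ T : Finset (V ⊕ (Σ _ : V, Fin m)), 4 ≤ T.card ∧
      ∀ w ∈ T, (CG).dist (Sum.inr ⟨v, a⟩) w ≠ (CG).dist (Sum.inr ⟨v, b⟩) w := by
  classical
  haveI : NeZero m := ⟨by omega⟩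
  obtain ⟨c1, hc1a, hc1b, hc1nb⟩ := exists_private_neighbor hm hab
  obtain ⟨c2, hc2b, hc2a, hc2na⟩ := exists_private_neighbor hm hab.symm
  have hxy : (Sum.inr ⟨v, a⟩ : V ⊕ (Σ _ : V, Fin m)) ≠ Sum.inr ⟨v, b⟩ := by
    simp [hab]
  have hc1c2 : c1 ≠ c2 := by
    rintro rfl; exact hc2a hc1a
  have hac1 : a ≠ c1 := hc1a.ne
  have hbc2 : b ≠ c2 := hc2b.ne
  have hbc1 : b ≠ c1 := Ne.symm hc1nb
  have hac2 : a ≠ c2 := Ne.symm hc2na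
  refine ⟨{Sum.inr ⟨v, a⟩, Sum.inr ⟨v, b⟩, Sum.inr ⟨v, c1⟩, Sum.inr ⟨v, c2⟩}, ?_, ?_⟩
  · rw [Finset.card_insert_of_notMem (by simp [hab, hac1, hac2]),
      Finset.card_insert_of_notMem (by simp [hbc1, hbc2]),
      Finset.card_insert_of_notMem (by simp [hc1c2]),
      Finset.card_singleton]
  · intro w hw
    simp only [Finset.mem_insert, Finset.mem_singleton] at hw
    have hpos := (corona_connected (m := m) hG).pos_dist_of_ne hxy
    rcases hw with rfl | rfl | rfl | rfl
    · rw [SimpleGraph.dist_self]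
      rw [SimpleGraph.dist_comm] at hpos
      omega
    · rw [SimpleGraph.dist_self (v := (Sum.inr ⟨v, b⟩ : V ⊕ (Σ _ : V, Fin m)))]
      omega
    · rw [dist_rr_adj v hc1a, dist_rr_nonadj hG v hbc1 hc1b]
      omega
    · rw [dist_rr_nonadj hG v hac2 hc2a, dist_rr_adj v hc2b]
      omega

end pairs

/-- for `G` connected non-trivial and `m ≥ 5`, the corona `G ⊙ C_m`
(every copy the cycle of order `m`) is 4-metric dimensional. -/
theorem stmt_8 {V : Type*} [Fintype V] [Nontrivial V] (G : SimpleGraph V) (hG : G.Connected)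
    (m : ℕ) (hm : 5 ≤ m) :
    kMetricDimensional (corona G (fun _ : V => SimpleGraph.cycleGraph m)) 4 := by
  classical
  haveI : NeZero m := ⟨by omega⟩
  constructor
  · refine ⟨Set.univ, ?_⟩
    rintro (u | ⟨u, a⟩) (v | ⟨v, b⟩) hxy
    · obtain ⟨T, hc, hd⟩ := pair_ll hG hm (fun h : u = v => hxy (by rw [h]))
      exact ⟨T, Set.subset_univ _, hc, hd⟩
    · obtain ⟨T, hc, hd⟩ := pair_lr hG hm u v b
      exact ⟨T, Set.subset_univ _, hc, hd⟩
    · obtain ⟨T, hc, hd⟩ := pair_lr hG hm v u a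
      exact ⟨T, Set.subset_univ _, hc, fun w hw => (hd w hw).symm⟩
    · by_cases huv : u = v
      · subst huv
        have hab : a ≠ b := by rintro rfl; exact hxy rfl
        obtain ⟨T, hc, hd⟩ := pair_rr_same hG hm u hab
        exact ⟨T, Set.subset_univ _, hc, hd⟩
      · obtain ⟨T, hc, hd⟩ := pair_rr_diff hG hm huv a b
        exact ⟨T, Set.subset_univ _, hc, hd⟩
  · rintro k ⟨S, hS⟩
    obtain ⟨v⟩ := (inferInstance : Nonempty V)
    have h01 : (0 : Fin m) ≠ 1 := by
      intro h
      exact fin_cast_zero_contra hm (k := 1) (by omega) (by omega)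
        (by push_cast; linear_combination -h)
    have hxy : (Sum.inr ⟨v, (0 : Fin m)⟩ : V ⊕ (Σ _ : V, Fin m)) ≠ Sum.inr ⟨v, 1⟩ := by
      simp [h01]
    obtain ⟨T, hTS, hTc, hTd⟩ := hS _ _ hxy
    set D : Finset (V ⊕ (Σ _ : V, Fin m)) :=
      {Sum.inr ⟨v, (0 : Fin m)⟩, Sum.inr ⟨v, 1⟩, Sum.inr ⟨v, 0 - 1⟩, Sum.inr ⟨v, 1 + 1⟩}
      with hD
    have hsub : T ⊆ D := by
      intro w hw
      have hdist := hTd w hw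
      rcases w with t | ⟨t, c⟩
      · exfalso
        rw [dist_rl' hG, dist_rl' hG] at hdist
        exact hdist rfl
      · by_cases htv : t = v
        · subst htv
          by_cases e0 : c = 0
          · subst e0; simp [hD]
          by_cases e1 : c = 1
          · subst e1; simp [hD]
          by_cases em1 : c = 0 - 1
          · subst em1; simp [hD]
          by_cases e2 : c = 1 + 1
          · subst e2; simp [hD]
          exfalso
          apply hdist
          have na0 : ¬ (SimpleGraph.cycleGraph m).Adj (0 : Fin m) c := by
            rw [cyc_adj hm]
            rintro (h | h)
            · exact em1 (by linear_combination -h)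
            · exact e1 (by linear_combination h)
          have na1 : ¬ (SimpleGraph.cycleGraph m).Adj (1 : Fin m) c := by
            rw [cyc_adj hm]
            rintro (h | h)
            · exact e0 (by linear_combination -h)
            · exact e2 h
          rw [dist_rr_nonadj hG t (Ne.symm e0) na0, dist_rr_nonadj hG t (Ne.symm e1) na1]
        · exfalso
          rw [dist_rr_ne hG (fun h : v = t => htv h.symm),
            dist_rr_ne hG (fun h : v = t => htv h.symm)] at hdist
          exact hdist rfl
    have hDcard : D.card ≤ 4 := by
      refine (Finset.card_insert_le _ _).trans (Nat.succ_le_succ ?_)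
      refine (Finset.card_insert_le _ _).trans (Nat.succ_le_succ ?_)
      refine (Finset.card_insert_le _ _).trans (Nat.succ_le_succ ?_)
      simp
    have := Finset.card_le_card hsub
    omega
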